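/- Let ω₁, ω₂ be real numbers with ω₁ ≠ 0 and ω₂/ω₁ irrational. Let s ∈ ℤ and let μ : ℤ × ℤ → ℂ satisfy μ(a+a', b+b') = μ(a,b)·μ(a',b') and |μ(a,b)| = 1 for all a, a', b, b' ∈ ℤ. Suppose Θ : ℂ → ℂ is holomorphic on all of ℂ and satisfies, for all a, b ∈ ℤ and all v ∈ ℂ, Θ(v + a·ω₁ + b·ω₂) = μ(a,b) · exp((s·π·i/ω₁)·(b²·ω₂ + 2·b·v)) · Θ(v). Then there exist A ∈ ℂ and α ∈ ℝ such that Θ(z) = A · exp(2·π·i·α·z) for all z ∈ ℂ. -/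

import Mathlib

open Real Complex Filter Topology


lemma dense_comb (ω₁ ω₂ : ℝ) (hω₁ : ω₁ ≠ 0) (hirr : Irrational (ω₂ / ω₁)) :
    Dense {x : ℝ | ∃ a b : ℤ, x = a * ω₁ + b * ω₂} := by
  rcases (AddSubgroup.closure ({ω₁, ω₂} : Set ℝ)).dense_or_cyclic with h | ⟨g, hg⟩
  · refine h.mono ?_
    intro x hx
    refine AddSubgroup.closure_induction ?_ ?_ ?_ ?_ hx
    · rintro y (rfl | rfl)
      · exact ⟨1, 0, by push_cast; ring⟩
      · exact ⟨0, 1, by push_cast; ring⟩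
    · exact ⟨0, 0, by push_cast; ring⟩
    · rintro y z - - ⟨a, b, rfl⟩ ⟨a', b', rfl⟩
      exact ⟨a + a', b + b', by push_cast; ring⟩
    · rintro y - ⟨a, b, rfl⟩
      exact ⟨-a, -b, by push_cast; ring⟩
  · exfalso
    have h1 : ω₁ ∈ AddSubgroup.closure ({ω₁, ω₂} : Set ℝ) :=
      AddSubgroup.subset_closure (by simp)
    have h2 : ω₂ ∈ AddSubgroup.closure ({ω₁, ω₂} : Set ℝ) :=
      AddSubgroup.subset_closure (by simp)
    rw [hg, AddSubgroup.mem_closure_singleton] at h1 h2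
    obtain ⟨m, hm⟩ := h1
    obtain ⟨n, hn⟩ := h2
    have hg0 : g ≠ 0 := by rintro rfl; simp at hm; exact hω₁ hm.symm
    refine hirr ⟨(n : ℚ) / (m : ℚ), ?_⟩
    rw [← hm, ← hn, zsmul_eq_mul, zsmul_eq_mul]
    push_cast
    rw [mul_div_mul_right _ _ hg0]

lemma differentiable_conj_conj {f : ℂ → ℂ} (hf : Differentiable ℂ f) :
    Differentiable ℂ fun z => (starRingEnd ℂ) (f ((starRingEnd ℂ) z)) := by
  intro z
  have hd := (hf ((starRingEnd ℂ) z)).hasDerivAt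
  rw [hasDerivAt_iff_tendsto_slope] at hd
  have hconj : Tendsto (fun w : ℂ => (starRingEnd ℂ) w) (𝓝[≠] z)
      (𝓝[≠] ((starRingEnd ℂ) z)) := by
    rw [tendsto_nhdsWithin_iff]
    constructor
    · exact (Complex.continuous_conj.tendsto z).mono_left nhdsWithin_le_nhds
    · filter_upwards [self_mem_nhdsWithin] with w hw
      simp only [Set.mem_compl_iff, Set.mem_singleton_iff] at hw ⊢
      intro h; apply hw; simpa using congrArg (starRingEnd ℂ) h
  have key : HasDerivAt (fun w => (starRingEnd ℂ) (f ((starRingEnd ℂ) w)))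
      ((starRingEnd ℂ) (deriv f ((starRingEnd ℂ) z))) z := by
    rw [hasDerivAt_iff_tendsto_slope]
    have := (Complex.continuous_conj.tendsto _).comp (hd.comp hconj)
    refine this.congr fun w => ?_
    simp [slope_def_field, Function.comp, map_div₀]
  exact key.differentiableAt

lemma const_of_real_translates {f : ℂ → ℂ} (hf : Differentiable ℂ f)
    (h : ∀ z : ℂ, ∀ t : ℝ, f (z + t) = f z) (z w : ℂ) : f z = f w := by
  apply is_const_of_deriv_eq_zero hf
  intro x
  have he : HasDerivAt (fun u : ℂ => f (x + u)) (deriv f x) 0 := by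
    simpa [Function.comp_def] using ((hf (x + 0)).hasDerivAt.comp (0:ℂ) ((hasDerivAt_id (0:ℂ)).const_add x))
  have h1 : HasDerivAt (fun t : ℝ => f (x + t)) (deriv f x) 0 := by
    simpa using he.comp_ofReal
  have h2 : HasDerivAt (fun t : ℝ => f (x + t)) 0 0 := by
    have heq : (fun t : ℝ => f (x + t)) = fun _ => f x := funext fun t => h x t
    rw [heq]; exact hasDerivAt_const _ _
  exact h1.unique h2

/-- a sequence of nonzero complex numbers tending to 0 within ≠ -/
lemma tendsto_seq_nhdsWithin : Tendsto (fun n : ℕ => ((1 / (n + 1) : ℝ) : ℂ)) atTop (𝓝[≠] 0) := by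
  rw [tendsto_nhdsWithin_iff]
  constructor
  · have h : Tendsto (fun n : ℕ => (1 / (n + 1) : ℝ)) atTop (𝓝 0) :=
      tendsto_one_div_add_atTop_nhds_zero_nat
    have h2 := (Complex.continuous_ofReal.tendsto 0).comp h
    simpa [Function.comp_def, one_div] using h2
  · filter_upwards with n
    simp only [Set.mem_compl_iff, Set.mem_singleton_iff]
    intro h
    rw [Complex.ofReal_eq_zero] at h
    have : (0:ℝ) < 1 / (n + 1) := by positivity
    linarith [h ▸ this]

/-- Proposition 2.1: there are no nontrivial holomorphic theta functions for a
pseudolattice `L = ℤω₁ + ℤω₂`. -/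
theorem no_nontrivial_holomorphic_theta
    (ω₁ ω₂ : ℝ) (hω₁ : ω₁ ≠ 0) (hirr : Irrational (ω₂ / ω₁))
    (s : ℤ) (μ : ℤ × ℤ → ℂ)
    (hμmul : ∀ a a' b b' : ℤ, μ (a + a', b + b') = μ (a, b) * μ (a', b'))
    (hμabs : ∀ a b : ℤ, ‖μ (a, b)‖ = 1)
    (Θ : ℂ → ℂ) (hΘ : Differentiable ℂ Θ)
    (hper : ∀ a b : ℤ, ∀ v : ℂ,
      Θ (v + (a : ℂ) * (ω₁ : ℂ) + (b : ℂ) * (ω₂ : ℂ)) =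
        μ (a, b) *
          Complex.exp (((s : ℂ) * (π : ℂ) * Complex.I / (ω₁ : ℂ)) *
            ((b : ℂ) ^ 2 * (ω₂ : ℂ) + 2 * (b : ℂ) * v)) * Θ v) :
    ∃ (A : ℂ) (α : ℝ), ∀ z : ℂ,
      Θ z = A * Complex.exp (2 * (π : ℂ) * Complex.I * (α : ℂ) * z) := by
  have hπ : (π : ℝ) ≠ 0 := Real.pi_ne_zero
  set k : ℂ := (s : ℂ) * (π : ℂ) * Complex.I / (ω₁ : ℂ) with hk
  have hμ0 : ∀ a b : ℤ, μ (a, b) ≠ 0 := by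
    intro a b h
    have := hμabs a b
    rw [h, norm_zero] at this
    norm_num at this
  have hD := dense_comb ω₁ ω₂ hω₁ hirr
  -- Step A : the norm of Θ is constant on ℝ
  have hnorm : ∀ x : ℝ, ‖Θ (x : ℂ)‖ = ‖Θ 0‖ := by
    have hcont1 : Continuous fun x : ℝ => ‖Θ (x : ℂ)‖ :=
      (hΘ.continuous.comp Complex.continuous_ofReal).norm
    have heq : (fun x : ℝ => ‖Θ (x : ℂ)‖) = fun _ => ‖Θ 0‖ := by
      refine Continuous.ext_on hD hcont1 continuous_const ?_
      rintro x ⟨a, b, rfl⟩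
      have hx : ((a * ω₁ + b * ω₂ : ℝ) : ℂ) = 0 + (a:ℂ) * (ω₁:ℂ) + (b:ℂ) * (ω₂:ℂ) := by
        push_cast; ring
      have hval := hper a b 0
      rw [← hx] at hval
      show ‖Θ (((a : ℝ) * ω₁ + (b : ℝ) * ω₂ : ℝ) : ℂ)‖ = ‖Θ 0‖
      have hexp : k * ((b:ℂ)^2 * (ω₂:ℂ) + 2 * (b:ℂ) * 0)
          = ((s * π * (b^2 * ω₂) / ω₁ : ℝ) : ℂ) * Complex.I := by
        rw [hk]; push_cast; field_simp; ring
      rw [hval, hexp]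
      rw [norm_mul, norm_mul, hμabs, Complex.norm_exp_ofReal_mul_I]
      ring
    exact fun x => congrFun heq x
  by_cases hc : Θ 0 = 0
  · -- Θ vanishes identically
    have hzero : ∀ x : ℝ, Θ (x : ℂ) = 0 := by
      intro x
      have := hnorm x
      rw [hc, norm_zero, norm_eq_zero] at this
      exact this
    have hfreq : ∃ᶠ z in 𝓝[≠] (0:ℂ), Θ z = (fun _ => (0:ℂ)) z :=
      tendsto_seq_nhdsWithin.frequently (Frequently.of_forall fun n => hzero _)
    have hΘeq : Θ = fun _ => (0:ℂ) :=
      AnalyticOnNhd.eq_of_frequently_eq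
        (analyticOnNhd_univ_iff_differentiable.mpr hΘ)
        (analyticOnNhd_univ_iff_differentiable.mpr (differentiable_const 0)) hfreq
    exact ⟨0, 0, fun z => by rw [hΘeq]; simp⟩
  -- Step C : Θ never vanishes
  have hΘs : Differentiable ℂ fun z => (starRingEnd ℂ) (Θ ((starRingEnd ℂ) z)) :=
    differentiable_conj_conj hΘ
  have hne : ∀ z, Θ z ≠ 0 := by
    have hprod : (fun z => Θ z * (starRingEnd ℂ) (Θ ((starRingEnd ℂ) z)))
        = fun _ => ((‖Θ 0‖ ^ 2 : ℝ) : ℂ) := by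
      refine AnalyticOnNhd.eq_of_frequently_eq
        (analyticOnNhd_univ_iff_differentiable.mpr (hΘ.mul hΘs))
        (analyticOnNhd_univ_iff_differentiable.mpr (differentiable_const _))
        (z₀ := 0) (tendsto_seq_nhdsWithin.frequently (Frequently.of_forall fun n => ?_))
      set x : ℝ := 1 / (n + 1)
      have hcx : (starRingEnd ℂ) (x : ℂ) = (x : ℂ) := Complex.conj_ofReal x
      rw [hcx, Complex.mul_conj]
      rw [Complex.normSq_eq_norm_sq, hnorm x]
    intro z hz
    have := congrFun hprod z
    rw [hz, zero_mul] at this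
    have h2 : (‖Θ 0‖ ^ 2 : ℝ) = 0 := by exact_mod_cast this.symm
    exact hc (norm_eq_zero.mp (by nlinarith [norm_nonneg (Θ 0)]))
  -- Step D : logarithmic derivative
  have hΘ' : Differentiable ℂ (deriv Θ) :=
    analyticOnNhd_univ_iff_differentiable.mp
      (analyticOnNhd_univ_iff_differentiable.mpr hΘ).deriv
  set f : ℂ → ℂ := fun z => deriv Θ z / Θ z with hf_def
  have hf : Differentiable ℂ f := hΘ'.div hΘ hne
  have E1 : ∀ v : ℂ, Θ (v + (ω₁:ℂ)) = μ (1, 0) * Θ v := by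
    intro v
    have := hper 1 0 v
    simpa using this
  have E2 : ∀ v : ℂ, Θ (v + (ω₂:ℂ))
      = μ (0, 1) * (Complex.exp (k * ((ω₂:ℂ) + 2 * v)) * Θ v) := by
    intro v
    have := hper 0 1 v
    push_cast at this
    rw [zero_mul, add_zero] at this
    have harg : k * ((1:ℂ) ^ 2 * (ω₂:ℂ) + 2 * 1 * v) = k * ((ω₂:ℂ) + 2 * v) := by ring
    rw [harg, one_mul] at this
    rw [this, mul_assoc]
  have D1 : ∀ v : ℂ, deriv Θ (v + (ω₁:ℂ)) = μ (1, 0) * deriv Θ v := by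
    intro v
    have h1 : deriv (fun z => Θ (z + (ω₁:ℂ))) v = deriv Θ (v + (ω₁:ℂ)) :=
      deriv_comp_add_const Θ _ v
    have h2 : (fun z => Θ (z + (ω₁:ℂ))) = fun z => μ (1, 0) * Θ z := funext E1
    rw [h2] at h1
    rw [← h1, deriv_const_mul _ (hΘ v)]
  have F1 : ∀ v : ℂ, f (v + (ω₁:ℂ)) = f v := by
    intro v
    rw [hf_def]
    simp only
    rw [D1, E1, mul_div_mul_left _ _ (hμ0 1 0)]
  have D2 : ∀ v : ℂ, deriv Θ (v + (ω₂:ℂ))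
      = μ (0, 1) * (Complex.exp (k * ((ω₂:ℂ) + 2 * v)) * (deriv Θ v + 2 * k * Θ v)) := by
    intro v
    have hinner : HasDerivAt (fun z : ℂ => k * ((ω₂:ℂ) + 2 * z)) (k * 2) v := by
      simpa using (((hasDerivAt_id v).const_mul (2:ℂ)).const_add (ω₂:ℂ)).const_mul k
    have hexp := hinner.cexp
    have hrhs := ((hexp.mul (hΘ v).hasDerivAt).const_mul (μ (0, 1)))
    have h1 : deriv (fun z => Θ (z + (ω₂:ℂ))) v = deriv Θ (v + (ω₂:ℂ)) :=
      deriv_comp_add_const Θ _ v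
    have h2 : (fun z => Θ (z + (ω₂:ℂ)))
        = fun z => μ (0, 1) * (Complex.exp (k * ((ω₂:ℂ) + 2 * z)) * Θ z) := funext E2
    rw [h2] at h1
    rw [← h1]; refine hrhs.deriv.trans ?_
    ring
  have F2 : ∀ v : ℂ, f (v + (ω₂:ℂ)) = f v + 2 * k := by
    intro v
    rw [hf_def]
    simp only
    rw [D2, E2]
    rw [mul_div_mul_left _ _ (hμ0 0 1), mul_div_mul_left _ _ (Complex.exp_ne_zero _)]
    field_simp [hne v]
  -- deriv f is doubly periodic
  have P1 : Function.Periodic (deriv f) (ω₁:ℂ) := by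
    intro v
    have h1 : deriv (fun z => f (z + (ω₁:ℂ))) v = deriv f (v + (ω₁:ℂ)) :=
      deriv_comp_add_const f _ v
    have h2 : (fun z => f (z + (ω₁:ℂ))) = f := funext F1
    rw [h2] at h1
    exact h1.symm
  have P2 : Function.Periodic (deriv f) (ω₂:ℂ) := by
    intro v
    have h1 : deriv (fun z => f (z + (ω₂:ℂ))) v = deriv f (v + (ω₂:ℂ)) :=
      deriv_comp_add_const f _ v
    have h2 : (fun z => f (z + (ω₂:ℂ))) = fun z => f z + 2 * k := funext F2
    rw [h2, deriv_add_const] at h1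
    exact h1.symm
  have hf' : Differentiable ℂ (deriv f) :=
    analyticOnNhd_univ_iff_differentiable.mp
      (analyticOnNhd_univ_iff_differentiable.mpr hf).deriv
  -- deriv f is invariant under all real translations
  have htrans : ∀ z : ℂ, ∀ t : ℝ, deriv f (z + t) = deriv f z := by
    intro z
    have hcont : Continuous fun t : ℝ => deriv f (z + (t : ℂ)) :=
      hf'.continuous.comp (continuous_const.add Complex.continuous_ofReal)
    have heq : (fun t : ℝ => deriv f (z + (t : ℂ))) = fun _ => deriv f z := by
      refine Continuous.ext_on hD hcont continuous_const ?_
      rintro t ⟨a, b, rfl⟩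
      simp only
      have hx : z + ((a * ω₁ + b * ω₂ : ℝ) : ℂ)
          = z + (a:ℂ) * (ω₁:ℂ) + (b:ℂ) * (ω₂:ℂ) := by push_cast; ring
      rw [hx]
      calc deriv f (z + (a:ℂ) * (ω₁:ℂ) + (b:ℂ) * (ω₂:ℂ))
          = deriv f (z + (a:ℂ) * (ω₁:ℂ)) := (P2.int_mul b) (z + (a:ℂ) * (ω₁:ℂ))
        _ = deriv f z := (P1.int_mul a) z
    exact fun t => congrFun heq t
  -- hence deriv f is constant
  set β : ℂ := deriv f 0 with hβ
  have hconstβ : ∀ z : ℂ, deriv f z = β :=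
    fun z => const_of_real_translates hf' htrans z 0
  -- f is affine: f z = β z + f 0
  have haffine : ∀ z : ℂ, f z = β * z + f 0 := by
    intro z
    have hg : Differentiable ℂ fun z => f z - β * z :=
      hf.sub (differentiable_id.const_mul β)
    have hg' : ∀ x : ℂ, deriv (fun z => f z - β * z) x = 0 := by
      intro x
      have hd : HasDerivAt (fun z => f z - β * z) (deriv f x - β * 1) x :=
        (hf x).hasDerivAt.sub ((hasDerivAt_id x).const_mul β)
      rw [hd.deriv, hconstβ x]; ring
    have := is_const_of_deriv_eq_zero hg hg' z 0
    simp only [mul_zero, sub_zero] at this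
    linear_combination this
  -- β = 0 from ω₁-periodicity of f
  have hβ0 : β = 0 := by
    have := F1 0
    rw [haffine ((0:ℂ) + (ω₁:ℂ)), haffine 0] at this
    simp only [zero_add, mul_zero] at this
    have hω₁' : (ω₁ : ℂ) ≠ 0 := Complex.ofReal_ne_zero.mpr hω₁
    field_simp at this
    have h' : β * (ω₁:ℂ) = 0 := by linear_combination this
    exact (mul_eq_zero.mp h').resolve_right hω₁'
  set γ : ℂ := f 0 with hγ
  have hfconst : ∀ z : ℂ, f z = γ := fun z => by rw [haffine z, hβ0]; ring
  -- Θ' = γ Θ, hence Θ z = Θ 0 exp (γ z)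
  have hode : ∀ z : ℂ, deriv Θ z = γ * Θ z := by
    intro z
    have := hfconst z
    rw [hf_def] at this
    simp only at this
    rw [div_eq_iff (hne z)] at this
    exact this
  have hGconst : ∀ z : ℂ, Θ z * Complex.exp (-(γ * z)) = Θ 0 := by
    intro z
    have hg : Differentiable ℂ fun z => Θ z * Complex.exp (-(γ * z)) := by
      apply hΘ.mul
      apply Differentiable.cexp
      exact (differentiable_id.const_mul γ).neg
    have hg' : ∀ x : ℂ, deriv (fun z => Θ z * Complex.exp (-(γ * z))) x = 0 := by
      intro x
      have hd1 : HasDerivAt (fun z : ℂ => -(γ * z)) (-γ) x := by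
        simpa [Pi.neg_def] using ((hasDerivAt_id x).const_mul γ).neg
      have hd : HasDerivAt (fun z => Θ z * Complex.exp (-(γ * z)))
          (deriv Θ x * Complex.exp (-(γ * x)) + Θ x * (Complex.exp (-(γ * x)) * (-γ))) x :=
        (hΘ x).hasDerivAt.mul hd1.cexp
      rw [hd.deriv, hode x]; ring
    have := is_const_of_deriv_eq_zero hg hg' z 0
    simpa using this
  have hΘform : ∀ z : ℂ, Θ z = Θ 0 * Complex.exp (γ * z) := by
    intro z
    have h0 := hGconst z
    rw [← h0, mul_assoc, ← Complex.exp_add]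
    simp
  -- Re γ = 0
  have hre : γ.re = 0 := by
    have h1 := hnorm 1
    rw [Complex.ofReal_one, hΘform 1, mul_one, norm_mul,
      Complex.norm_exp] at h1
    have hΘ0 : ‖Θ 0‖ ≠ 0 := norm_ne_zero_iff.mpr hc
    have h2 : Real.exp γ.re = 1 :=
      mul_left_cancel₀ hΘ0 (h1.trans (mul_one _).symm)
    have h3 : Real.exp γ.re = Real.exp 0 := by rw [h2, Real.exp_zero]
    exact Real.exp_injective h3
  refine ⟨Θ 0, γ.im / (2 * π), fun z => ?_⟩
  have hγeq : 2 * (π : ℂ) * Complex.I * ((γ.im / (2 * π) : ℝ) : ℂ) = γ := by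
    have : γ = (γ.re : ℂ) + (γ.im : ℂ) * Complex.I := (Complex.re_add_im γ).symm
    rw [this, hre]
    push_cast
    have hπ' : (π : ℂ) ≠ 0 := Complex.ofReal_ne_zero.mpr hπ
    field_simp
    simp
  rw [hΘform z, hγeq]
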